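/- Let C be an additive right polycyclic code induced by a binary vector a. Suppose b is a nonzero binary polynomial in C of minimal degree among nonzero binary polynomials in C, and α g_1 + g_2 is a nonbinary element of C with g_1, g_2 binary, g_1 of minimal degree among binary parts of nonbinary elements of C, and g_1 dividing x^n − a(x) in F2[x]. Then b divides ((x^n − a(x))/g_1)·g_2 in F2[x]. -/

import Mathlib

open Polynomial

noncomputable section

abbrev F4 : Type := GaloisField 2 2

def IsBin (z : F4) : Prop := z = 0 ∨ z = 1

def IsBinVec {n : ℕ} (a : Fin n → F4) : Prop := ∀ i, IsBin (a i)

def IsBinPoly (p : Polynomial F4) : Prop := ∀ i, IsBin (p.coeff i)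

def polyOfVec {n : ℕ} (c : Fin n → F4) : Polynomial F4 :=
  ∑ i : Fin n, Polynomial.C (c i) * X ^ (i : ℕ)

def rightShift {n : ℕ} (a c : Fin n → F4) : Fin n → F4 := fun i =>
  (if (i : ℕ) = 0 then 0 else c ⟨(i : ℕ) - 1, lt_of_le_of_lt (Nat.sub_le _ _) i.isLt⟩)
    + c ⟨n - 1, Nat.sub_lt i.pos Nat.one_pos⟩ * a i

def leftShift {n : ℕ} (a c : Fin n → F4) : Fin n → F4 := fun i =>
  (if h : (i : ℕ) + 1 < n then c ⟨(i : ℕ) + 1, h⟩ else 0) + c ⟨0, i.pos⟩ * a i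

def seqShift {n : ℕ} (a c : Fin n → F4) : Fin n → F4 := fun i =>
  if h : (i : ℕ) + 1 < n then c ⟨(i : ℕ) + 1, h⟩ else ∑ j, a j * c j

def IsRightPolycyclic {n : ℕ} (a : Fin n → F4) (C : AddSubgroup (Fin n → F4)) : Prop :=
  ∀ c ∈ C, rightShift a c ∈ C

def IsLeftPolycyclic {n : ℕ} (a : Fin n → F4) (C : AddSubgroup (Fin n → F4)) : Prop :=
  ∀ c ∈ C, leftShift a c ∈ C

def quotMk {n : ℕ} (a : Fin n → F4) :
    Polynomial F4 →+* Polynomial F4 ⧸ Ideal.span {X ^ n - polyOfVec a} :=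
  Ideal.Quotient.mk _

def codeImage {n : ℕ} (a : Fin n → F4) (C : AddSubgroup (Fin n → F4)) :
    Set (Polynomial F4 ⧸ Ideal.span {X ^ n - polyOfVec a}) :=
  (fun c => quotMk a (polyOfVec c)) '' (C : Set (Fin n → F4))

namespace Stmt10

lemma one_add_one : (1:F4) + 1 = 0 := by
  rw [one_add_one_eq_two]; exact CharTwo.two_eq_zero

def S : Subring F4 where
  carrier := {z | IsBin z}
  zero_mem' := Or.inl rfl
  one_mem' := Or.inr rfl
  add_mem' := by rintro x y (rfl|rfl) (rfl|rfl) <;>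
    simp [IsBin, one_add_one]
  mul_mem' := by rintro x y (rfl|rfl) (rfl|rfl) <;> simp [IsBin]
  neg_mem' := by rintro x (rfl|rfl) <;> simp [IsBin, CharTwo.neg_eq]

instance : Nontrivial S :=
  ⟨⟨0, 1, fun h => zero_ne_one (α := F4) (congrArg Subtype.val h)⟩⟩

lemma isBinPoly_iff_lifts {p : Polynomial F4} : IsBinPoly p ↔ p ∈ lifts S.subtype := by
  rw [lifts_iff_coeff_lifts]
  constructor
  · exact fun h i => ⟨⟨p.coeff i, h i⟩, rfl⟩
  · intro h i
    obtain ⟨z, hz⟩ := h i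
    rw [← hz]; exact z.2

lemma binPoly_monic {b : Polynomial F4} (hb : IsBinPoly b) (h0 : b ≠ 0) : b.Monic := by
  rcases hb b.natDegree with h | h
  · exact absurd (leadingCoeff_eq_zero.mp h) h0
  · exact h

lemma binPoly_mul {p r : Polynomial F4} (hp : IsBinPoly p) (hr : IsBinPoly r) :
    IsBinPoly (p * r) := by
  rw [isBinPoly_iff_lifts] at *
  exact mul_mem hp hr

lemma binPoly_div_mod {p d : Polynomial F4} (hp : IsBinPoly p) (hd : IsBinPoly d)
    (hd0 : d ≠ 0) : IsBinPoly (p /ₘ d) ∧ IsBinPoly (p %ₘ d) := by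
  have hm := binPoly_monic hd hd0
  rw [isBinPoly_iff_lifts] at hp hd
  obtain ⟨d', hd'map, _, hd'm⟩ := lifts_and_degree_eq_and_monic hd hm
  obtain ⟨p', hp'map⟩ := (mem_lifts _).mp hp
  constructor <;> rw [isBinPoly_iff_lifts, mem_lifts]
  · exact ⟨p' /ₘ d', by rw [map_divByMonic S.subtype hd'm, hp'map, hd'map]⟩
  · exact ⟨p' %ₘ d', by rw [map_modByMonic S.subtype hd'm, hp'map, hd'map]⟩

lemma coeff_polyOfVec {n : ℕ} (c : Fin n → F4) (k : ℕ) :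
    (polyOfVec c).coeff k = if h : k < n then c ⟨k, h⟩ else 0 := by
  unfold polyOfVec
  rw [finset_sum_coeff]
  simp only [coeff_C_mul, coeff_X_pow, mul_ite, mul_one, mul_zero]
  split_ifs with h
  · rw [Finset.sum_eq_single (⟨k, h⟩ : Fin n)]
    · simp
    · intro j _ hj
      simp only [ite_eq_right_iff]
      intro hkj
      exact absurd (Fin.ext hkj.symm : j = ⟨k, h⟩) hj
    · simp
  · apply Finset.sum_eq_zero
    intro j _
    simp only [ite_eq_right_iff]
    intro hkj
    exact absurd (hkj ▸ j.isLt) h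

lemma shift_eq {n : ℕ} (hn : 0 < n) (a c : Fin n → F4) :
    polyOfVec (rightShift a c) =
      X * polyOfVec c + C (c ⟨n - 1, Nat.sub_lt hn Nat.one_pos⟩) * (polyOfVec a - X ^ n) := by
  ext k
  rcases k with _ | k
  · rw [coeff_add, coeff_C_mul, coeff_sub, coeff_polyOfVec, coeff_polyOfVec, mul_coeff_zero,
      coeff_X_zero, zero_mul, coeff_X_pow, dif_pos hn, dif_pos hn,
      if_neg (by omega : ¬ (0:ℕ) = n), zero_add, sub_zero]
    simp only [rightShift, if_true, zero_add]
  · simp only [coeff_add, coeff_C_mul, coeff_sub, coeff_polyOfVec, coeff_X_pow, coeff_X_mul]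
    by_cases h1 : k + 1 < n
    · have hk : k < n := Nat.lt_of_succ_lt h1
      rw [dif_pos h1, dif_pos hk, dif_pos h1, if_neg (Nat.ne_of_lt h1)]
      simp [rightShift]
    · rw [dif_neg h1]
      by_cases h2 : k + 1 = n
      · have hk : k < n := h2 ▸ Nat.lt_succ_self k
        rw [dif_pos hk, dif_neg h1, if_pos h2]
        have : (⟨k, hk⟩ : Fin n) = ⟨n - 1, Nat.sub_lt hn Nat.one_pos⟩ := by
          apply Fin.ext; simp [← h2]
        rw [this]
        ring
      · have hk : ¬ k < n := by omega
        rw [dif_neg hk, dif_neg h1, if_neg h2]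
        ring


section Code

variable {n : ℕ} {a : Fin n → F4} {C : AddSubgroup (Fin n → F4)}

lemma polyOfVec_add (c d : Fin n → F4) :
    polyOfVec (c + d) = polyOfVec c + polyOfVec d := by
  unfold polyOfVec
  rw [← Finset.sum_add_distrib]
  exact Finset.sum_congr rfl fun i _ => by rw [Pi.add_apply, map_add, add_mul]

lemma polyOfVec_neg (c : Fin n → F4) : polyOfVec (-c) = -polyOfVec c := by
  unfold polyOfVec
  rw [← Finset.sum_neg_distrib]
  exact Finset.sum_congr rfl fun i _ => by rw [Pi.neg_apply, map_neg, neg_mul]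

lemma zero_mem_code : (0 : Polynomial F4 ⧸ Ideal.span {X ^ n - polyOfVec a}) ∈ codeImage a C := by
  refine ⟨0, C.zero_mem, ?_⟩
  have : polyOfVec (0 : Fin n → F4) = 0 := by
    unfold polyOfVec; simp
  simp [this]

lemma add_mem_code {x y : Polynomial F4 ⧸ Ideal.span {X ^ n - polyOfVec a}}
    (hx : x ∈ codeImage a C) (hy : y ∈ codeImage a C) : x + y ∈ codeImage a C := by
  obtain ⟨c, hc, rfl⟩ := hx
  obtain ⟨d, hd, rfl⟩ := hy
  exact ⟨c + d, C.add_mem hc hd, by simp only []; rw [polyOfVec_add, map_add]⟩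

lemma neg_mem_code {x : Polynomial F4 ⧸ Ideal.span {X ^ n - polyOfVec a}}
    (hx : x ∈ codeImage a C) : -x ∈ codeImage a C := by
  obtain ⟨c, hc, rfl⟩ := hx
  exact ⟨-c, C.neg_mem hc, by simp only []; rw [polyOfVec_neg, map_neg]⟩

lemma spanGen_zero : quotMk a (X ^ n - polyOfVec a) = 0 :=
  Ideal.Quotient.eq_zero_iff_mem.mpr (Ideal.mem_span_singleton_self _)

lemma X_mul_mem_code (hn : 0 < n) (hC : IsRightPolycyclic a C)
    {y : Polynomial F4 ⧸ Ideal.span {X ^ n - polyOfVec a}}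
    (hy : y ∈ codeImage a C) : quotMk a X * y ∈ codeImage a C := by
  obtain ⟨c, hc, rfl⟩ := hy
  refine ⟨rightShift a c, hC c hc, ?_⟩
  show quotMk a (polyOfVec (rightShift a c)) = _
  rw [shift_eq hn, map_add, map_mul, map_mul,
    show polyOfVec a - X ^ n = -(X ^ n - polyOfVec a) by ring, map_neg, spanGen_zero,
    neg_zero, mul_zero, add_zero]

lemma X_pow_mul_mem_code (hn : 0 < n) (hC : IsRightPolycyclic a C)
    {y : Polynomial F4 ⧸ Ideal.span {X ^ n - polyOfVec a}} (k : ℕ)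
    (hy : y ∈ codeImage a C) : quotMk a X ^ k * y ∈ codeImage a C := by
  induction k with
  | zero => simpa using hy
  | succ k ih =>
    rw [pow_succ, mul_comm (quotMk a X ^ k) (quotMk a X), mul_assoc]
    exact X_mul_mem_code hn hC ih

lemma bin_mul_mem_code (hn : 0 < n) (hC : IsRightPolycyclic a C)
    {p : Polynomial F4} (hp : IsBinPoly p)
    {y : Polynomial F4 ⧸ Ideal.span {X ^ n - polyOfVec a}}
    (hy : y ∈ codeImage a C) : quotMk a p * y ∈ codeImage a C := by
  have hrw : quotMk a p * y = ∑ i ∈ p.support, quotMk a (monomial i (p.coeff i)) * y := by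
    rw [← Finset.sum_mul, ← map_sum, ← as_sum_support]
  rw [hrw]
  refine Finset.sum_induction _ (· ∈ codeImage a C)
    (fun _ _ hx hy' => add_mem_code hx hy') zero_mem_code ?_
  intro i _
  rcases hp i with h | h
  · rw [h]; simp only [monomial_zero_right, map_zero, zero_mul]
    exact zero_mem_code
  · rw [h, ← X_pow_eq_monomial, map_pow]
    exact X_pow_mul_mem_code hn hC i hy

end Code

end Stmt10

/-- let `C` be an additive right polycyclic code induced by the
binary vector `a`, `b` a nonzero binary polynomial in `C` of minimal degree
among nonzero binary polynomials in `C`, and `α g1 + g2` a nonbinary element of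
`C` with `g1, g2` binary, `g1` of minimal degree among binary parts of
nonbinary elements of `C`, and `g1 ∣ x^n - a(x)` in `F2[x]` (say
`q · g1 = x^n - a(x)` with `q` binary).  Then `b` divides
`((x^n - a(x))/g1) · g2 = q · g2` in `F2[x]`. -/
theorem stmt_10 (n : ℕ) (hn : 0 < n) (a : Fin n → F4) (ha : IsBinVec a)
    (C : AddSubgroup (Fin n → F4)) (hC : IsRightPolycyclic a C)
    (α : F4) (hα : α ^ 2 + α + 1 = 0)
    (b : Polynomial F4) (hbbin : IsBinPoly b) (hb0 : b ≠ 0)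
    (hbdeg : b.degree < (n : WithBot ℕ)) (hbmem : quotMk a b ∈ codeImage a C)
    (hbmin : ∀ p : Polynomial F4, IsBinPoly p → p ≠ 0 → p.degree < (n : WithBot ℕ) →
      quotMk a p ∈ codeImage a C → b.degree ≤ p.degree)
    (g1 g2 : Polynomial F4) (hg1bin : IsBinPoly g1) (hg2bin : IsBinPoly g2)
    (hg1deg : g1.degree < (n : WithBot ℕ)) (hg2deg : g2.degree < (n : WithBot ℕ))
    (hg1ne : g1 ≠ 0)
    (hmem : quotMk a (Polynomial.C α * g1 + g2) ∈ codeImage a C)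
    (hmin : ∀ h1 h2 : Polynomial F4, IsBinPoly h1 → IsBinPoly h2 → h1 ≠ 0 →
      h1.degree < (n : WithBot ℕ) → h2.degree < (n : WithBot ℕ) →
      quotMk a (Polynomial.C α * h1 + h2) ∈ codeImage a C → g1.degree ≤ h1.degree)
    (q : Polynomial F4) (hqbin : IsBinPoly q) (hq : q * g1 = X ^ n - polyOfVec a) :
    ∃ r : Polynomial F4, IsBinPoly r ∧ q * g2 = b * r := by
  classical
  have hmono : b.Monic := Stmt10.binPoly_monic hbbin hb0
  have hqg2bin : IsBinPoly (q * g2) := Stmt10.binPoly_mul hqbin hg2bin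
  have h0 : quotMk a (q * g1) = 0 := by rw [hq]; exact Stmt10.spanGen_zero
  have hqg2mem : quotMk a (q * g2) ∈ codeImage a C := by
    have h1 : quotMk a q * quotMk a (Polynomial.C α * g1 + g2) ∈ codeImage a C :=
      Stmt10.bin_mul_mem_code hn hC hqbin hmem
    have h2 : quotMk a q * quotMk a (Polynomial.C α * g1 + g2) = quotMk a (q * g2) := by
      rw [← map_mul,
        show q * (Polynomial.C α * g1 + g2) = Polynomial.C α * (q * g1) + q * g2 by ring,
        map_add, map_mul, h0, mul_zero, zero_add]
    rwa [h2] at h1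
  have key : (q * g2) %ₘ b = 0 := by
    by_contra hr
    have hdm := Stmt10.binPoly_div_mod hqg2bin hbbin hb0
    have hrmem : quotMk a ((q * g2) %ₘ b) ∈ codeImage a C := by
      rw [modByMonic_eq_sub_mul_div _ b, map_sub,
        show quotMk a (b * (q * g2 /ₘ b)) = quotMk a (q * g2 /ₘ b) * quotMk a b from by
          rw [map_mul, mul_comm]]
      have hsum := Stmt10.add_mem_code hqg2mem
        (Stmt10.neg_mem_code (Stmt10.bin_mul_mem_code hn hC hdm.1 hbmem))
      simpa [sub_eq_add_neg] using hsum
    have hlt := degree_modByMonic_lt (q * g2) hmono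
    have := hbmin _ hdm.2 hr (hlt.trans hbdeg) hrmem
    exact absurd (lt_of_le_of_lt this hlt) (lt_irrefl _)
  refine ⟨(q * g2) /ₘ b, (Stmt10.binPoly_div_mod hqg2bin hbbin hb0).1, ?_⟩
  conv_lhs => rw [← modByMonic_add_div (q * g2) b]
  rw [key, zero_add]
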